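/- Let k ≥ 3 be odd and let f: C_k^2 → C_3 be a binary polymorphism. Define g: C_k → C_3 by g(x) = f(x,x). Then deg g = deg_1 f + deg_2 f, where deg_i f are the degrees of f at its coordinates and deg g is the degree of the unary homomorphism g. -/
import Mathlib


/-- The oriented edge `[u,v]` as an edge chain: the antisymmetrized generator. -/
noncomputable def oe {V : Type*} [DecidableEq V] (u v : V) : V × V →₀ ℤ :=
  Finsupp.single (u, v) 1 - Finsupp.single (v, u) 1

/-- The map on edge chains induced by a map on vertices. -/
noncomputable def fE {V W : Type*} [DecidableEq V] [DecidableEq W] (f : V → W) :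
    (V × V →₀ ℤ) →+ (W × W →₀ ℤ) :=
  Finsupp.mapDomain.addMonoidHom (Prod.map f f)

/-- Adjacency in the `m`-cycle on vertex set `ZMod m`. -/
def CycAdj (m : ℕ) (u v : ZMod m) : Prop := v = u + 1 ∨ v = u - 1

/-- The oriented cycle `O_m = [0,1] + [1,2] + ⋯ + [m-1,0]` as an edge chain. -/
noncomputable def cycO (m : ℕ) : ZMod m × ZMod m →₀ ℤ :=
  ∑ i ∈ Finset.range m, oe (i : ZMod m) ((i : ZMod m) + 1)

/-- Adjacency in the direct power `C_kⁿ`: coordinatewise adjacency in `C_k`. -/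
def PowAdj (k n : ℕ) (x y : Fin n → ZMod k) : Prop := ∀ i, CycAdj k (x i) (y i)

open Classical in
/-- The edge chain `O_{k,i}ⁿ` of all oriented edges of `C_kⁿ` whose `i`-th coordinate is
oriented according to `O_k`. -/
noncomputable def Okin (k n : ℕ) [NeZero k] (i : Fin n) :
    ((Fin n → ZMod k) × (Fin n → ZMod k)) →₀ ℤ :=
  ∑ p ∈ Finset.univ.filter
      (fun p : (Fin n → ZMod k) × (Fin n → ZMod k) =>
        PowAdj k n p.1 p.2 ∧ p.2 i = p.1 i + 1),
    oe p.1 p.2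

/-! ### Auxiliary machinery -/

def w3 (u v : ZMod 3) : ℤ := if v = u + 1 then 1 else if v = u - 1 then -1 else 0

noncomputable def phi3 : (ZMod 3 × ZMod 3 →₀ ℤ) →ₗ[ℤ] ℤ :=
  Finsupp.linearCombination ℤ (fun p : ZMod 3 × ZMod 3 => w3 p.1 p.2)

lemma phi3_single (p : ZMod 3 × ZMod 3) (n : ℤ) :
    phi3 (Finsupp.single p n) = n * w3 p.1 p.2 := by
  simp [phi3, Finsupp.linearCombination_single, mul_comm]

lemma phi3_oe (u v : ZMod 3) : phi3 (oe u v) = w3 u v - w3 v u := by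
  simp [oe, map_sub, phi3_single]

lemma w3_antisymm : ∀ u v : ZMod 3, u ≠ v → w3 v u = - w3 u v := by decide
lemma w3_pm : ∀ u v : ZMod 3, u ≠ v → w3 u v = 1 ∨ w3 u v = -1 := by decide
lemma w3_cast : ∀ u v : ZMod 3, u ≠ v → ((w3 u v : ZMod 3)) = v - u := by decide
lemma w3_succ : ∀ u : ZMod 3, w3 u (u + 1) - w3 (u + 1) u = 2 := by decide

lemma phi3_cycO3 : phi3 (cycO 3) = 6 := by
  rw [cycO, map_sum]
  simp only [phi3_oe, w3_succ]
  norm_num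

lemma fE_oe {V W : Type*} [DecidableEq V] [DecidableEq W] (f : V → W) (u v : V) :
    fE f (oe u v) = oe (f u) (f v) := by
  simp [fE, oe, map_sub, Finsupp.mapDomain.addMonoidHom_apply, Finsupp.mapDomain_single]

lemma zmod_pm1_ne {k : ℕ} [NeZero k] (hk : 3 ≤ k) (x : ZMod k) : x + 1 ≠ x - 1 := by
  intro h
  have h2 : ((2 : ℕ) : ZMod k) = 0 := by push_cast; linear_combination h
  have := (ZMod.natCast_eq_zero_iff 2 k).1 h2
  have := Nat.le_of_dvd (by norm_num) this
  omega

def di0 (k : ℕ) [NeZero k] (p : (Fin 2 → ZMod k) × (Fin 2 → ZMod k)) :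
    (ZMod k × ZMod k) × Bool := ((p.1 0, p.1 1), decide (p.2 1 = p.1 1 + 1))

def dj0 (k : ℕ) [NeZero k] (q : (ZMod k × ZMod k) × Bool) :
    (Fin 2 → ZMod k) × (Fin 2 → ZMod k) :=
  (![q.1.1, q.1.2], ![q.1.1 + 1, if q.2 then q.1.2 + 1 else q.1.2 - 1])

open Classical in
lemma okin_sum0 {M : Type*} [AddCommMonoid M] (k : ℕ) [NeZero k] (hk : 3 ≤ k)
    (F : ((Fin 2 → ZMod k) × (Fin 2 → ZMod k)) → M) :
    ∑ p ∈ Finset.univ.filter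
      (fun p : (Fin 2 → ZMod k) × (Fin 2 → ZMod k) =>
        PowAdj k 2 p.1 p.2 ∧ p.2 0 = p.1 0 + 1), F p
    = ∑ q : ZMod k × ZMod k,
        (F (![q.1, q.2], ![q.1 + 1, q.2 + 1]) + F (![q.1, q.2], ![q.1 + 1, q.2 - 1])) := by
  have hne := zmod_pm1_ne hk
  have left_inv : ∀ p ∈ Finset.univ.filter
      (fun p : (Fin 2 → ZMod k) × (Fin 2 → ZMod k) =>
        PowAdj k 2 p.1 p.2 ∧ p.2 0 = p.1 0 + 1), dj0 k (di0 k p) = p := by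
    intro p hp
    rw [Finset.mem_filter] at hp
    obtain ⟨-, hadj, h0⟩ := hp
    refine Prod.ext ?_ ?_
    · funext a; fin_cases a <;> simp [di0, dj0]
    · funext a; fin_cases a
      · simpa [di0, dj0] using h0.symm
      · rcases hadj 1 with h | h
        · simp [di0, dj0, h]
        · simp [di0, dj0, h]
          exact fun hc => hc.symm
  have hj : ∀ q ∈ (Finset.univ : Finset ((ZMod k × ZMod k) × Bool)),
      dj0 k q ∈ Finset.univ.filter
      (fun p : (Fin 2 → ZMod k) × (Fin 2 → ZMod k) =>
        PowAdj k 2 p.1 p.2 ∧ p.2 0 = p.1 0 + 1) := by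
    intro q _
    rw [Finset.mem_filter]
    refine ⟨Finset.mem_univ _, fun a => ?_, by simp [dj0]⟩
    cases' q with q b
    cases b <;> fin_cases a <;> simp [dj0, CycAdj]
  have right_inv : ∀ q ∈ (Finset.univ : Finset ((ZMod k × ZMod k) × Bool)),
      di0 k (dj0 k q) = q := by
    rintro ⟨q, b⟩ -
    cases b
    · have hd : ¬ (q.2 - 1 = q.2 + 1) := fun hc => hne q.2 hc.symm
      simp [di0, dj0, hd]
    · simp [di0, dj0]
  have key := Finset.sum_nbij' (di0 k) (dj0 k) (fun p _ => Finset.mem_univ _) hj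
      left_inv right_inv (f := F) (g := fun q => F (dj0 k q))
      (fun p hp => by simp only [left_inv p hp])
  rw [key, Fintype.sum_prod_type]
  refine Finset.sum_congr rfl fun q _ => ?_
  rw [Fintype.sum_bool]
  rfl

def di1 (k : ℕ) [NeZero k] (p : (Fin 2 → ZMod k) × (Fin 2 → ZMod k)) :
    (ZMod k × ZMod k) × Bool := ((p.1 0, p.1 1), decide (p.2 0 = p.1 0 + 1))

def dj1 (k : ℕ) [NeZero k] (q : (ZMod k × ZMod k) × Bool) :
    (Fin 2 → ZMod k) × (Fin 2 → ZMod k) :=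
  (![q.1.1, q.1.2], ![if q.2 then q.1.1 + 1 else q.1.1 - 1, q.1.2 + 1])

open Classical in
lemma okin_sum1 {M : Type*} [AddCommMonoid M] (k : ℕ) [NeZero k] (hk : 3 ≤ k)
    (F : ((Fin 2 → ZMod k) × (Fin 2 → ZMod k)) → M) :
    ∑ p ∈ Finset.univ.filter
      (fun p : (Fin 2 → ZMod k) × (Fin 2 → ZMod k) =>
        PowAdj k 2 p.1 p.2 ∧ p.2 1 = p.1 1 + 1), F p
    = ∑ q : ZMod k × ZMod k,
        (F (![q.1, q.2], ![q.1 + 1, q.2 + 1]) + F (![q.1, q.2], ![q.1 - 1, q.2 + 1])) := by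
  have hne := zmod_pm1_ne hk
  have left_inv : ∀ p ∈ Finset.univ.filter
      (fun p : (Fin 2 → ZMod k) × (Fin 2 → ZMod k) =>
        PowAdj k 2 p.1 p.2 ∧ p.2 1 = p.1 1 + 1), dj1 k (di1 k p) = p := by
    intro p hp
    rw [Finset.mem_filter] at hp
    obtain ⟨-, hadj, h1⟩ := hp
    refine Prod.ext ?_ ?_
    · funext a; fin_cases a <;> simp [di1, dj1]
    · funext a; fin_cases a
      · rcases hadj 0 with h | h
        · simp [di1, dj1, h]
        · simp [di1, dj1, h]
          exact fun hc => hc.symm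
      · simpa [di1, dj1] using h1.symm
  have hj : ∀ q ∈ (Finset.univ : Finset ((ZMod k × ZMod k) × Bool)),
      dj1 k q ∈ Finset.univ.filter
      (fun p : (Fin 2 → ZMod k) × (Fin 2 → ZMod k) =>
        PowAdj k 2 p.1 p.2 ∧ p.2 1 = p.1 1 + 1) := by
    intro q _
    rw [Finset.mem_filter]
    refine ⟨Finset.mem_univ _, fun a => ?_, by simp [dj1]⟩
    cases' q with q b
    cases b <;> fin_cases a <;> simp [dj1, CycAdj]
  have right_inv : ∀ q ∈ (Finset.univ : Finset ((ZMod k × ZMod k) × Bool)),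
      di1 k (dj1 k q) = q := by
    rintro ⟨q, b⟩ -
    cases b
    · have hd : ¬ (q.1 - 1 = q.1 + 1) := fun hc => hne q.1 hc.symm
      simp [di1, dj1, hd]
    · simp [di1, dj1]
  have key := Finset.sum_nbij' (di1 k) (dj1 k) (fun p _ => Finset.mem_univ _) hj
      left_inv right_inv (f := F) (g := fun q => F (dj1 k q))
      (fun p hp => by simp only [left_inv p hp])
  rw [key, Fintype.sum_prod_type]
  refine Finset.sum_congr rfl fun q _ => ?_
  rw [Fintype.sum_bool]
  rfl

lemma sum_range_zmod {M : Type*} [AddCommMonoid M] (k : ℕ) [NeZero k] (h : ZMod k → M) :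
    ∑ i ∈ Finset.range k, h (i : ZMod k) = ∑ x : ZMod k, h x := by
  refine Finset.sum_nbij' (fun i => (i : ZMod k)) (fun x => x.val)
    (fun i _ => Finset.mem_univ _) (fun x _ => Finset.mem_range.2 (ZMod.val_lt x)) ?_ ?_ ?_
  · intro i hi
    exact ZMod.val_cast_of_lt (Finset.mem_range.1 hi)
  · intro x _
    exact ZMod.natCast_rightInverse x
  · intro i _
    rfl

def Wf {k : ℕ} (f : (Fin 2 → ZMod k) → ZMod 3) (a b : Fin 2 → ZMod k) : ℤ := w3 (f a) (f b)
def Af {k : ℕ} (f : (Fin 2 → ZMod k) → ZMod 3) (x y : ZMod k) : ℤ :=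
  Wf f ![x, y] ![x + 1, y + 1]
def Bf {k : ℕ} (f : (Fin 2 → ZMod k) → ZMod 3) (x y : ZMod k) : ℤ :=
  Wf f ![x, y] ![x + 1, y - 1]

lemma adj2 {k : ℕ} [NeZero k] (x y e1 e2 : ZMod k) (h1 : e1 = x + 1 ∨ e1 = x - 1)
    (h2 : e2 = y + 1 ∨ e2 = y - 1) : PowAdj k 2 ![x, y] ![e1, e2] := by
  intro a; fin_cases a
  · simpa [CycAdj] using h1
  · simpa [CycAdj] using h2

section WithHom
variable {k : ℕ} [NeZero k] (f : (Fin 2 → ZMod k) → ZMod 3)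
  (hf : ∀ x y, PowAdj k 2 x y → f x ≠ f y)

include hf

lemma Wf_anti {a b : Fin 2 → ZMod k} (h : PowAdj k 2 a b) : Wf f b a = - Wf f a b :=
  w3_antisymm _ _ (hf a b h)

lemma Wf_pm {a b : Fin 2 → ZMod k} (h : PowAdj k 2 a b) : Wf f a b = 1 ∨ Wf f a b = -1 :=
  w3_pm _ _ (hf a b h)

lemma phi3_fE_oe {a b : Fin 2 → ZMod k} (h : PowAdj k 2 a b) :
    phi3 (fE f (oe a b)) = 2 * Wf f a b := by
  rw [fE_oe, phi3_oe, w3_antisymm (f a) (f b) (hf a b h)]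
  unfold Wf; ring

lemma quad {a b c d : Fin 2 → ZMod k} (hab : PowAdj k 2 a b) (hbc : PowAdj k 2 b c)
    (hcd : PowAdj k 2 c d) (hda : PowAdj k 2 d a) :
    Wf f a b + Wf f b c + Wf f c d + Wf f d a = 0 := by
  have h3 : ((Wf f a b + Wf f b c + Wf f c d + Wf f d a : ℤ) : ZMod 3) = 0 := by
    push_cast
    unfold Wf
    rw [w3_cast _ _ (hf a b hab), w3_cast _ _ (hf b c hbc), w3_cast _ _ (hf c d hcd),
      w3_cast _ _ (hf d a hda)]
    ring
  have hdvd := (ZMod.intCast_zmod_eq_zero_iff_dvd _ 3).1 h3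
  norm_num at hdvd
  rcases Wf_pm f hf hab with h1 | h1 <;> rcases Wf_pm f hf hbc with h2 | h2 <;>
    rcases Wf_pm f hf hcd with h3 | h3 <;> rcases Wf_pm f hf hda with h4 | h4 <;> omega

end WithHom

set_option maxHeartbeats 1000000 in
/-- For a binary polymorphism `f : C_k² → C_3` (`k ≥ 3` odd), the diagonal unary
homomorphism `g(x) = f(x,x)` satisfies `deg g = deg₁ f + deg₂ f`. -/
theorem diagonal_degree_binary (k : ℕ) [NeZero k] (hk : 3 ≤ k) (hkodd : Odd k)
    (f : (Fin 2 → ZMod k) → ZMod 3)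
    (hf : ∀ x y, PowAdj k 2 x y → f x ≠ f y)
    (d₁ d₂ dg : ℤ)
    (hd₁ : fE f (Okin k 2 0) = (2 * (k : ℤ) * d₁) • cycO 3)
    (hd₂ : fE f (Okin k 2 1) = (2 * (k : ℤ) * d₂) • cycO 3)
    (hdg : fE (fun x : ZMod k => f (fun _ => x)) (cycO k) = dg • cycO 3) :
    dg = d₁ + d₂ := by
  classical
  -- Equation 1: from hd₁
  have e1 : ∑ q : ZMod k × ZMod k, (2 * Af f q.1 q.2 + 2 * Bf f q.1 q.2)
      = 2 * (k : ℤ) * d₁ * 6 := by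
    have h := congrArg phi3 hd₁
    rw [map_smul, smul_eq_mul, phi3_cycO3] at h
    rw [← h]
    unfold Okin
    rw [map_sum, map_sum, okin_sum0 k hk (fun p => phi3 (fE f (oe p.1 p.2)))]
    refine Finset.sum_congr rfl fun q _ => ?_
    rw [phi3_fE_oe f hf (adj2 _ _ _ _ (Or.inl rfl) (Or.inl rfl)),
        phi3_fE_oe f hf (adj2 _ _ _ _ (Or.inl rfl) (Or.inr rfl))]
    rfl
  -- Equation 2: from hd₂
  have hC : ∀ x y : ZMod k, Wf f ![x, y] ![x - 1, y + 1] = - Bf f (x - 1) (y + 1) := by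
    intro x y
    have hadj : PowAdj k 2 ![x - 1, y + 1] ![x, y] :=
      adj2 _ _ _ _ (Or.inl (by ring)) (Or.inr (by ring))
    rw [Wf_anti f hf hadj]
    unfold Bf
    rw [show (x - 1 + 1 : ZMod k) = x from by ring, show (y + 1 - 1 : ZMod k) = y from by ring]
  have e2 : ∑ q : ZMod k × ZMod k, (2 * Af f q.1 q.2 - 2 * Bf f (q.1 - 1) (q.2 + 1))
      = 2 * (k : ℤ) * d₂ * 6 := by
    have h := congrArg phi3 hd₂
    rw [map_smul, smul_eq_mul, phi3_cycO3] at h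
    rw [← h]
    unfold Okin
    rw [map_sum, map_sum, okin_sum1 k hk (fun p => phi3 (fE f (oe p.1 p.2)))]
    refine Finset.sum_congr rfl fun q _ => ?_
    rw [phi3_fE_oe f hf (adj2 _ _ _ _ (Or.inl rfl) (Or.inl rfl)),
        phi3_fE_oe f hf (adj2 _ _ _ _ (Or.inr rfl) (Or.inl rfl)), hC]
    unfold Af
    ring
  -- B-sum reindexing
  have hBre : ∑ q : ZMod k × ZMod k, Bf f (q.1 - 1) (q.2 + 1)
      = ∑ q : ZMod k × ZMod k, Bf f q.1 q.2 :=
    Fintype.sum_equiv ((Equiv.subRight (1 : ZMod k)).prodCongr (Equiv.addRight (1 : ZMod k)))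
      (fun q => Bf f (q.1 - 1) (q.2 + 1)) (fun q => Bf f q.1 q.2) (fun q => rfl)
  -- Equation 3: from hdg
  have hconst : ∀ u : ZMod k, (fun _ : Fin 2 => u) = ![u, u] := by
    intro u; funext a; fin_cases a <;> simp
  have e3 : ∑ x : ZMod k, 2 * Af f x x = dg * 6 := by
    have h := congrArg phi3 hdg
    rw [map_smul, smul_eq_mul, phi3_cycO3] at h
    rw [← h]
    unfold cycO
    rw [map_sum, map_sum]
    have step1 : ∀ n : ℕ,
        phi3 (fE (fun x : ZMod k => f (fun _ => x)) (oe (n : ZMod k) ((n : ZMod k) + 1)))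
        = (fun x : ZMod k => 2 * Af f x x) ((n : ZMod k)) := by
      intro n
      set x : ZMod k := (n : ZMod k) with hx
      have hadj : PowAdj k 2 ![x, x] ![x + 1, x + 1] :=
        adj2 _ _ _ _ (Or.inl rfl) (Or.inl rfl)
      simp only [fE_oe, hconst]
      rw [phi3_oe, w3_antisymm (f ![x, x]) (f ![x + 1, x + 1]) (hf _ _ hadj)]
      unfold Af Wf
      ring
    rw [Finset.sum_congr rfl (fun n _ => step1 n), sum_range_zmod k (fun x => 2 * Af f x x)]
  -- the diagonal sums
  set S : ZMod k → ℤ := fun j => ∑ x : ZMod k, Af f x (x + j) with hS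
  have step : ∀ j : ZMod k, S j = S (j + 2) := by
    intro j
    have hx : ∀ x : ZMod k,
        Af f x (x + j) = Af f (x - 1) (x + j + 1) + Bf f x (x + j + 2)
          - Bf f (x - 1) (x + j + 1) := by
      intro x
      have hab : PowAdj k 2 ![x, x + j] ![x + 1, x + j + 1] :=
        adj2 _ _ _ _ (Or.inl rfl) (Or.inl rfl)
      have hbc : PowAdj k 2 ![x + 1, x + j + 1] ![x, x + j + 2] :=
        adj2 _ _ _ _ (Or.inr (by ring)) (Or.inl (by ring))
      have hcd : PowAdj k 2 ![x, x + j + 2] ![x - 1, x + j + 1] :=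
        adj2 _ _ _ _ (Or.inr rfl) (Or.inr (by ring))
      have hda : PowAdj k 2 ![x - 1, x + j + 1] ![x, x + j] :=
        adj2 _ _ _ _ (Or.inl (by ring)) (Or.inr (by ring))
      have q := quad f hf hab hbc hcd hda
      have h2 : Wf f ![x + 1, x + j + 1] ![x, x + j + 2] = - Bf f x (x + j + 2) := by
        rw [Wf_anti f hf (adj2 _ _ _ _ (Or.inl rfl) (Or.inr (by ring)) :
          PowAdj k 2 ![x, x + j + 2] ![x + 1, x + j + 1])]
        unfold Bf
        rw [show (x + j + 2 - 1 : ZMod k) = x + j + 1 from by ring]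
      have h3 : Wf f ![x, x + j + 2] ![x - 1, x + j + 1] = - Af f (x - 1) (x + j + 1) := by
        rw [Wf_anti f hf (adj2 _ _ _ _ (Or.inl (by ring)) (Or.inl (by ring)) :
          PowAdj k 2 ![x - 1, x + j + 1] ![x, x + j + 2])]
        unfold Af
        rw [show (x - 1 + 1 : ZMod k) = x from by ring,
          show (x + j + 1 + 1 : ZMod k) = x + j + 2 from by ring]
      have h4 : Wf f ![x - 1, x + j + 1] ![x, x + j] = Bf f (x - 1) (x + j + 1) := by
        unfold Bf
        rw [show (x - 1 + 1 : ZMod k) = x from by ring,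
          show (x + j + 1 - 1 : ZMod k) = x + j from by ring]
      rw [h2, h3, h4] at q
      have h1 : Wf f ![x, x + j] ![x + 1, x + j + 1] = Af f x (x + j) := rfl
      rw [h1] at q
      linarith
    have hre1 : ∑ x : ZMod k, Af f (x - 1) (x + j + 1) = ∑ y : ZMod k, Af f y (y + j + 2) :=
      Fintype.sum_equiv (Equiv.subRight (1 : ZMod k))
        (fun x => Af f (x - 1) (x + j + 1)) (fun y => Af f y (y + j + 2))
        (fun x => by
          simp only [Equiv.subRight_apply]
          rw [show (x + j + 1 : ZMod k) = x - 1 + j + 2 from by ring])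
    have hre3 : ∑ x : ZMod k, Bf f (x - 1) (x + j + 1) = ∑ y : ZMod k, Bf f y (y + j + 2) :=
      Fintype.sum_equiv (Equiv.subRight (1 : ZMod k))
        (fun x => Bf f (x - 1) (x + j + 1)) (fun y => Bf f y (y + j + 2))
        (fun x => by
          simp only [Equiv.subRight_apply]
          rw [show (x + j + 1 : ZMod k) = x - 1 + j + 2 from by ring])
    have hS2 : S (j + 2) = ∑ y : ZMod k, Af f y (y + j + 2) := by
      rw [hS]
      exact Finset.sum_congr rfl fun y _ => by rw [show (y + (j + 2) : ZMod k) = y + j + 2 from by ring]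
    calc S j = ∑ x : ZMod k, (Af f (x - 1) (x + j + 1) + Bf f x (x + j + 2)
          - Bf f (x - 1) (x + j + 1)) := Finset.sum_congr rfl fun x _ => hx x
      _ = (∑ x : ZMod k, Af f (x - 1) (x + j + 1)) + (∑ x : ZMod k, Bf f x (x + j + 2))
          - ∑ x : ZMod k, Bf f (x - 1) (x + j + 1) := by
            rw [Finset.sum_sub_distrib, Finset.sum_add_distrib]
      _ = S (j + 2) := by rw [hre1, hre3, hS2]; ring
  have hiter : ∀ n : ℕ, S ((2 * n : ℕ) : ZMod k) = S 0 := by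
    intro n
    induction n with
    | zero => norm_num
    | succ m ih =>
      have hcast : ((2 * (m + 1) : ℕ) : ZMod k) = ((2 * m : ℕ) : ZMod k) + 2 := by
        push_cast; ring
      rw [hcast, ← step, ih]
  have hall : ∀ j : ZMod k, S j = S 0 := by
    intro j
    obtain ⟨t, ht⟩ := hkodd
    have hm : (2 * (t + 1) : ℕ) = k + 1 := by omega
    have h2m : ((2 * ((t + 1) * j.val) : ℕ) : ZMod k) = j := by
      rw [← mul_assoc, hm]
      push_cast [ZMod.natCast_self]
      rw [ZMod.natCast_rightInverse j]
      ring
    rw [← h2m]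
    exact hiter ((t + 1) * j.val)
  have hAtot : ∑ q : ZMod k × ZMod k, Af f q.1 q.2 = (k : ℤ) * S 0 := by
    calc ∑ q : ZMod k × ZMod k, Af f q.1 q.2 = ∑ x : ZMod k, ∑ y : ZMod k, Af f x y :=
          Fintype.sum_prod_type _
      _ = ∑ x : ZMod k, ∑ j : ZMod k, Af f x (x + j) :=
          Finset.sum_congr rfl fun x _ =>
            (Fintype.sum_equiv (Equiv.addLeft x) (fun j => Af f x (x + j))
              (fun y => Af f x y) (fun j => rfl)).symm
      _ = ∑ j : ZMod k, ∑ x : ZMod k, Af f x (x + j) := Finset.sum_comm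
      _ = ∑ _j : ZMod k, S 0 := Finset.sum_congr rfl fun j _ => hall j
      _ = (k : ℤ) * S 0 := by
          rw [Finset.sum_const, Finset.card_univ, ZMod.card, nsmul_eq_mul]
  -- final arithmetic
  have hsplit1 : ∑ q : ZMod k × ZMod k, (2 * Af f q.1 q.2 + 2 * Bf f q.1 q.2)
      = 2 * (∑ q : ZMod k × ZMod k, Af f q.1 q.2) + 2 * ∑ q : ZMod k × ZMod k, Bf f q.1 q.2 := by
    rw [Finset.sum_add_distrib, Finset.mul_sum, Finset.mul_sum]
  have hsplit2 : ∑ q : ZMod k × ZMod k, (2 * Af f q.1 q.2 - 2 * Bf f (q.1 - 1) (q.2 + 1))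
      = 2 * (∑ q : ZMod k × ZMod k, Af f q.1 q.2)
        - 2 * ∑ q : ZMod k × ZMod k, Bf f (q.1 - 1) (q.2 + 1) := by
    rw [Finset.sum_sub_distrib, Finset.mul_sum, Finset.mul_sum]
  rw [hsplit1] at e1
  rw [hsplit2, hBre] at e2
  have hS03 : S 0 = 3 * dg := by
    have : ∑ x : ZMod k, 2 * Af f x x = 2 * S 0 := by
      rw [hS, Finset.mul_sum]
      exact Finset.sum_congr rfl fun x _ => by rw [show (x + 0 : ZMod k) = x from by ring]
    rw [this] at e3
    linarith
  have hkpos : (0 : ℤ) < (k : ℤ) := by exact_mod_cast (by omega : 0 < k)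
  have hfin : 12 * (k : ℤ) * dg = 12 * (k : ℤ) * (d₁ + d₂) := by
    have ha := hAtot
    rw [hS03] at ha
    linarith [e1, e2, ha]
  have h12 : (12 * (k : ℤ)) ≠ 0 := by positivity
  exact mul_left_cancel₀ h12 (by linarith [hfin])
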